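/- Let n be a positive integer, Δt, Δx > 0, and let L¹, L² ∈ ℝ^{n×n} be the circulant matrices with entries (indices modulo n) L¹_{j,j±1} = 1/2 and L²_{j,j±1} = ±Δt/(2Δx), all other entries zero. Let A ∈ ℝ^{m×m} be symmetric with λ_max(A)·Δt/Δx ≤ 1, where λ_max(A) is the largest absolute eigenvalue of A (its spectral norm). Then for every u ∈ ℝ^{n×m}, the Lax–Friedrichs update satisfies ‖L¹ u − L² u Aᵀ‖_F ≤ ‖u‖_F. -/

import Mathlib

open Matrix
open scoped Real

/- Periodic (circulant) Lax-Friedrichs matrices: L¹ has entries 1/2 on the super- and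
sub-diagonal (indices modulo n), L² has entries ±Δt/(2Δx) there; all other entries zero. -/

noncomputable def L1 (n : ℕ) [NeZero n] : Matrix (Fin n) (Fin n) ℝ :=
  Matrix.of fun j k => (if k = j + 1 then (1 / 2 : ℝ) else 0) + (if k = j - 1 then (1 / 2 : ℝ) else 0)

noncomputable def L2 (n : ℕ) [NeZero n] (Δt Δx : ℝ) : Matrix (Fin n) (Fin n) ℝ :=
  Matrix.of fun j k =>
    (if k = j + 1 then Δt / (2 * Δx) else 0) + (if k = j - 1 then -(Δt / (2 * Δx)) else 0)

/- Frobenius norm of a real matrix. -/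
noncomputable def frob {n m : ℕ} (M : Matrix (Fin n) (Fin m) ℝ) : ℝ :=
  Real.sqrt (∑ i, ∑ j, (M i j) ^ 2)

/- Spectral norm (largest absolute eigenvalue, for symmetric matrices) of a real matrix:
the operator norm induced by the Euclidean norm. -/
noncomputable def specNorm {m : ℕ} (A : Matrix (Fin m) (Fin m) ℝ) : ℝ :=
  ‖Matrix.toEuclideanCLM (𝕜 := ℝ) A‖

/- L²-stability of the full Lax-Friedrichs scheme under the CFL condition
λ_max(A)·Δt/Δx ≤ 1. -/
theorem stmt3 (n m : ℕ) [NeZero n] (Δt Δx : ℝ) (hΔt : 0 < Δt) (hΔx : 0 < Δx)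
    (A : Matrix (Fin m) (Fin m) ℝ) (hA : A.IsSymm)
    (hCFL : specNorm A * Δt / Δx ≤ 1)
    (u : Matrix (Fin n) (Fin m) ℝ) :
    frob (L1 n * u - L2 n Δt Δx * u * Aᵀ) ≤ frob u := by
  have hΔx' : Δx ≠ 0 := ne_of_gt hΔx
  set c : ℝ := Δt / Δx with hc
  have hc0 : 0 < c := div_pos hΔt hΔx
  have hAT : Aᵀ = A := hA
  have hH : A.IsHermitian := by
    rwa [Matrix.IsHermitian, Matrix.conjTranspose_eq_transpose_of_trivial]
  set b := hH.eigenvectorBasis with hbdef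
  set lam := hH.eigenvalues with hlamdef
  set V : Matrix (Fin n) (Fin m) ℝ := L1 n * u - L2 n Δt Δx * u * Aᵀ with hVdef
  -- mulVec as a sum with reversed multiplication order
  have hmv : ∀ (w : Fin m → ℝ) (k : Fin m), (A *ᵥ w) k = ∑ p, w p * A k p := by
    intro w k; simp [Matrix.mulVec, dotProduct, mul_comm]
  -- dot product with eigenvector
  have hdotA : ∀ (w : Fin m → ℝ) (i : Fin m), ⇑(b i) ⬝ᵥ (A *ᵥ w) = lam i * (⇑(b i) ⬝ᵥ w) := by
    intro w i
    rw [Matrix.dotProduct_mulVec]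
    have e3 : ⇑(b i) ᵥ* A = lam i • ⇑(b i) := by
      rw [← hAT, Matrix.vecMul_transpose]
      exact hH.mulVec_eigenvectorBasis i
    rw [e3, smul_dotProduct]
    rfl
  -- Parseval
  have hpars : ∀ (w : Fin m → ℝ), ∑ k, (w k)^2 = ∑ i, (⇑(b i) ⬝ᵥ w)^2 := by
    intro w
    have hy : ∀ (y : EuclideanSpace ℝ (Fin m)), ∑ k, (y k)^2 = ‖y‖^2 := by
      intro y; rw [EuclideanSpace.norm_eq, Real.sq_sqrt (Finset.sum_nonneg fun i _ => sq_nonneg _)]; simp [Real.norm_eq_abs, sq_abs]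
    have hrepr : ∀ (y : EuclideanSpace ℝ (Fin m)) (i : Fin m), b.repr y i = ⇑(b i) ⬝ᵥ ⇑y := by
      intro y i; rw [b.repr_apply_apply]; simp [PiLp.inner_apply, dotProduct, mul_comm]
    set y : EuclideanSpace ℝ (Fin m) := (WithLp.equiv 2 _).symm w with hy0
    calc ∑ k, (w k)^2 = ‖y‖^2 := hy y
      _ = ‖b.repr y‖^2 := by rw [b.repr.norm_map]
      _ = ∑ i, (b.repr y i)^2 := (hy (b.repr y)).symm
      _ = ∑ i, (⇑(b i) ⬝ᵥ w)^2 := Finset.sum_congr rfl fun i _ => by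
            rw [hrepr, hy0]; rfl
  -- eigenvalue bound
  have hlam_le : ∀ i, |lam i| ≤ specNorm A := by
    intro i
    have h1 : (Matrix.toEuclideanCLM (𝕜 := ℝ) A) (b i) = lam i • (b i) := by
      refine (WithLp.equiv 2 (Fin m → ℝ)).injective ?_
      change A *ᵥ (b i).ofLp = lam i • (b i).ofLp
      exact hH.mulVec_eigenvectorBasis i
    have h2 := (Matrix.toEuclideanCLM (𝕜 := ℝ) A).le_opNorm (b i)
    rw [h1, norm_smul, b.orthonormal.1 i, mul_one, mul_one, Real.norm_eq_abs] at h2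
    exact h2
  have hcl : ∀ i, |c * lam i| ≤ 1 := by
    intro i
    have h3 : specNorm A * c ≤ 1 := by rw [hc, ← mul_div_assoc]; exact hCFL
    have h4 : c * |lam i| ≤ c * specNorm A := mul_le_mul_of_nonneg_left (hlam_le i) hc0.le
    calc |c * lam i| = c * |lam i| := by rw [abs_mul, abs_of_pos hc0]
      _ ≤ c * specNorm A := h4
      _ ≤ 1 := by rw [mul_comm]; exact h3
  -- row entry formulas
  have hL1 : ∀ j k, (L1 n * u) j k = 1/2 * u (j+1) k + 1/2 * u (j-1) k := by
    intro j k; simp [Matrix.mul_apply, L1, add_mul, Finset.sum_add_distrib, ite_mul]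
  have hL2 : ∀ j p, (L2 n Δt Δx * u) j p = c/2 * u (j+1) p - c/2 * u (j-1) p := by
    intro j p
    simp [Matrix.mul_apply, L2, add_mul, Finset.sum_add_distrib, ite_mul]
    rw [hc]; ring
  have hL2A : ∀ j k, (L2 n Δt Δx * u * Aᵀ) j k
      = c/2 * (A *ᵥ u (j+1)) k - c/2 * (A *ᵥ u (j-1)) k := by
    intro j k
    rw [Matrix.mul_apply]
    simp_rw [hL2, Matrix.transpose_apply, sub_mul, mul_assoc]
    rw [Finset.sum_sub_distrib, ← Finset.mul_sum, ← Finset.mul_sum, hmv, hmv]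
  have hVrow : ∀ j k, V j k = 1/2 * u (j+1) k + 1/2 * u (j-1) k
      - (c/2 * (A *ᵥ u (j+1)) k - c/2 * (A *ᵥ u (j-1)) k) := by
    intro j k
    rw [hVdef, Matrix.sub_apply, hL1, hL2A]
  -- coordinates of V rows in the eigenbasis
  have hβ : ∀ (i : Fin m) (j : Fin n), ⇑(b i) ⬝ᵥ V j =
      (1 - c * lam i)/2 * (⇑(b i) ⬝ᵥ u (j+1)) + (1 + c * lam i)/2 * (⇑(b i) ⬝ᵥ u (j-1)) := by
    intro i j
    have hdp : ∀ (w : Fin m → ℝ), ⇑(b i) ⬝ᵥ w = ∑ k, (b i) k * w k := fun w => rfl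
    rw [hdp]
    simp_rw [hVrow]
    have expand : ∀ k : Fin m, (b i) k * (1/2 * u (j+1) k + 1/2 * u (j-1) k
        - (c/2 * (A *ᵥ u (j+1)) k - c/2 * (A *ᵥ u (j-1)) k))
        = 1/2 * ((b i) k * u (j+1) k) + 1/2 * ((b i) k * u (j-1) k)
          - (c/2 * ((b i) k * (A *ᵥ u (j+1)) k) - c/2 * ((b i) k * (A *ᵥ u (j-1)) k)) := by
      intro k; ring
    simp_rw [expand]
    rw [Finset.sum_sub_distrib, Finset.sum_add_distrib, Finset.sum_sub_distrib,
      ← Finset.mul_sum, ← Finset.mul_sum, ← Finset.mul_sum, ← Finset.mul_sum]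
    have e1 := hdotA (u (j+1)) i
    have e2 := hdotA (u (j-1)) i
    rw [hdp] at e1 e2
    rw [hdp (u (j+1)), hdp (u (j-1))] at *
    rw [e1, e2]
    ring
  -- shift sums
  have hshiftp : ∀ (f : Fin n → ℝ), ∑ j, f (j + 1) = ∑ j, f j := by
    intro f
    exact Fintype.sum_equiv (Equiv.addRight (1 : Fin n)) _ f (fun j => by simp)
  have hshiftm : ∀ (f : Fin n → ℝ), ∑ j, f (j - 1) = ∑ j, f j := by
    intro f
    exact Fintype.sum_equiv (Equiv.subRight (1 : Fin n)) _ f (fun j => by simp)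
  -- main inequality on sums of squares
  have key : ∑ j, ∑ k, (V j k)^2 ≤ ∑ j, ∑ k, (u j k)^2 := by
    calc ∑ j, ∑ k, (V j k)^2 = ∑ j, ∑ i, (⇑(b i) ⬝ᵥ V j)^2 :=
          Finset.sum_congr rfl fun j _ => hpars (V j)
      _ = ∑ i, ∑ j, (⇑(b i) ⬝ᵥ V j)^2 := Finset.sum_comm
      _ ≤ ∑ i, ∑ j, (⇑(b i) ⬝ᵥ u j)^2 := by
          apply Finset.sum_le_sum
          intro i _
          set q := (1 - c * lam i)/2 with hqdef
          set p := (1 + c * lam i)/2 with hpdef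
          have habs := abs_le.mp (hcl i)
          have hq : 0 ≤ q := by rw [hqdef]; linarith [habs.2]
          have hp : 0 ≤ p := by rw [hpdef]; linarith [habs.1]
          have hpq : q + p = 1 := by rw [hqdef, hpdef]; ring
          calc ∑ j, (⇑(b i) ⬝ᵥ V j)^2
              = ∑ j, (q * (⇑(b i) ⬝ᵥ u (j+1)) + p * (⇑(b i) ⬝ᵥ u (j-1)))^2 :=
                Finset.sum_congr rfl fun j _ => by rw [hβ]
            _ ≤ ∑ j, (q * (⇑(b i) ⬝ᵥ u (j+1))^2 + p * (⇑(b i) ⬝ᵥ u (j-1))^2) := by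
                apply Finset.sum_le_sum
                intro j _
                nlinarith [mul_nonneg hq hp, sq_nonneg ((⇑(b i) ⬝ᵥ u (j+1)) - (⇑(b i) ⬝ᵥ u (j-1))), hpq]
            _ = q * ∑ j, (⇑(b i) ⬝ᵥ u (j+1))^2 + p * ∑ j, (⇑(b i) ⬝ᵥ u (j-1))^2 := by
                rw [Finset.sum_add_distrib, Finset.mul_sum, Finset.mul_sum]
            _ = q * ∑ j, (⇑(b i) ⬝ᵥ u j)^2 + p * ∑ j, (⇑(b i) ⬝ᵥ u j)^2 := by
                rw [hshiftp (fun j => (⇑(b i) ⬝ᵥ u j)^2), hshiftm (fun j => (⇑(b i) ⬝ᵥ u j)^2)]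
            _ = ∑ j, (⇑(b i) ⬝ᵥ u j)^2 := by rw [← add_mul, hpq, one_mul]
      _ = ∑ j, ∑ i, (⇑(b i) ⬝ᵥ u j)^2 := Finset.sum_comm
      _ = ∑ j, ∑ k, (u j k)^2 := Finset.sum_congr rfl fun j _ => (hpars (u j)).symm
  unfold frob
  exact Real.sqrt_le_sqrt key
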